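/- (No Usage, Corollary 5.4 of LDC) In LDC(N≥): let ∅ ⊢ f :^1 (^0 A → A), and let ∅ ⊢ a₁ :^0 A and ∅ ⊢ a₂ :^0 A. Then the terms f a₁^0 and f a₂^0 have the same operational behavior under the heap semantics: either for every n there is an n-step reduction [∅] f a₁^0 ⟹^1_n [H₁] c₁ if and only if there is one for f a₂^0 (so both diverge together), or there exists n, a value v, and heaps H₁*, H₂* such that [∅] f a₁^0 ⟹^1_n [H₁*] v and [∅] f a₂^0 ⟹^1_n [H₂*] v, i.e. both reduce (in the same number of steps) to the same value term v. -/

import Mathlib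

/-!
The simply-typed calculus LDC(N≥): graded by the preordered semiring of natural
numbers with the descending order, i.e. the preorder `q <: q'` holds iff `q' ≤ q`.
-/

namespace LDC

/-- Types of LDC(N≥): `Unit`, graded functions `^r A → B`, graded products
`^r A₁ × A₂` and sums `A₁ + A₂`. -/
inductive Ty : Type where
  | unit : Ty
  | arr : ℕ → Ty → Ty → Ty
  | prod : ℕ → Ty → Ty → Ty
  | sum : Ty → Ty → Ty

/-- Terms of LDC(N≥), with variables named by natural numbers. -/
inductive Tm : Type where
  /-- variable `x` -/
  | var : ℕ → Tm
  /-- `λ^r x:A. b` -/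
  | lam : ℕ → ℕ → Ty → Tm → Tm
  /-- application `b a^r` -/
  | app : Tm → Tm → ℕ → Tm
  /-- `unit` -/
  | unit : Tm
  /-- `let_{q₀} unit be a in b` -/
  | letUnit : ℕ → Tm → Tm → Tm
  /-- `(a₁^r, a₂)` -/
  | pair : Tm → ℕ → Tm → Tm
  /-- `let_{q₀} (x^r, y) be a in b` -/
  | letPair : ℕ → ℕ → ℕ → ℕ → Tm → Tm → Tm
  /-- `inj₁ a` -/
  | inj1 : Tm → Tm
  /-- `inj₂ a` -/
  | inj2 : Tm → Tm
  /-- `case_{q₀} a of x₁.b₁; x₂.b₂` -/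
  | case : ℕ → Tm → ℕ → Tm → ℕ → Tm → Tm

/-- Free variables of a term. -/
def fv : Tm → Finset ℕ
  | .var x => {x}
  | .lam _ x _ b => fv b \ {x}
  | .app b a _ => fv b ∪ fv a
  | .unit => ∅
  | .letUnit _ a b => fv a ∪ fv b
  | .pair a _ b => fv a ∪ fv b
  | .letPair _ x _ y a b => fv a ∪ (fv b \ {x, y})
  | .inj1 a => fv a
  | .inj2 a => fv a
  | .case _ a x₁ b₁ x₂ b₂ => fv a ∪ (fv b₁ \ {x₁}) ∪ (fv b₂ \ {x₂})

/-- Capture-avoiding substitution `a{c/z}` of `c` for the free occurrences of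
`z` in `a` (binders shadowing `z` are left untouched). -/
def subst (z : ℕ) (c : Tm) : Tm → Tm
  | .var x => if x = z then c else .var x
  | .lam r x A b => .lam r x A (if x = z then b else subst z c b)
  | .app b a r => .app (subst z c b) (subst z c a) r
  | .unit => .unit
  | .letUnit q a b => .letUnit q (subst z c a) (subst z c b)
  | .pair a r b => .pair (subst z c a) r (subst z c b)
  | .letPair q x r y a b =>
      .letPair q x r y (subst z c a) (if x = z ∨ y = z then b else subst z c b)
  | .inj1 a => .inj1 (subst z c a)
  | .inj2 a => .inj2 (subst z c a)
  | .case q a x₁ b₁ x₂ b₂ =>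
      .case q (subst z c a) x₁ (if x₁ = z then b₁ else subst z c b₁)
        x₂ (if x₂ = z then b₂ else subst z c b₂)

/-- A context is a list of graded assumptions `x :^q A`. -/
abbrev Ctx := List (ℕ × ℕ × Ty)

/-- `⌊Γ⌋`: the underlying ungraded context. -/
def floor (Γ : Ctx) : List (ℕ × Ty) := Γ.map (fun e => (e.1, e.2.2))

/-- `Γ₁ + Γ₂`: pointwise addition of grades (meaningful when `⌊Γ₁⌋ = ⌊Γ₂⌋`). -/
def ctxAdd (Γ₁ Γ₂ : Ctx) : Ctx :=
  List.zipWith (fun e₁ e₂ => (e₁.1, e₁.2.1 + e₂.2.1, e₁.2.2)) Γ₁ Γ₂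

/-- `q·Γ`: multiply every grade of `Γ` by `q`. -/
def ctxSMul (q : ℕ) (Γ : Ctx) : Ctx := Γ.map (fun e => (e.1, q * e.2.1, e.2.2))

/-- The preorder `q <: q'` of N≥, i.e. `q' ≤ q` (descending order). -/
def gradeLe (q q' : ℕ) : Prop := q' ≤ q

/-- `Γ <: Γ'`: same underlying assumptions, grades pointwise related by `<:`. -/
def ctxLe (Γ Γ' : Ctx) : Prop :=
  List.Forall₂ (fun e e' => e.1 = e'.1 ∧ e.2.2 = e'.2.2 ∧ gradeLe e.2.1 e'.2.1) Γ Γ'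

/-- The typing judgment `Γ ⊢ a :^q A` of LDC(N≥). -/
inductive Typing : Ctx → Tm → ℕ → Ty → Prop where
  | var (Γ₁ Γ₂ : Ctx) (x q : ℕ) (A : Ty) :
      Typing (ctxSMul 0 Γ₁ ++ [(x, q, A)] ++ ctxSMul 0 Γ₂) (.var x) q A
  | lam {Γ : Ctx} {b : Tm} {q : ℕ} {B : Ty} (r x : ℕ) (A : Ty) :
      Typing (Γ ++ [(x, q * r, A)]) b q B →
      Typing Γ (.lam r x A b) q (.arr r A B)
  | app {Γ₁ Γ₂ : Ctx} {b a : Tm} {q r : ℕ} {A B : Ty} :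
      Typing Γ₁ b q (.arr r A B) →
      Typing Γ₂ a (q * r) A →
      floor Γ₁ = floor Γ₂ →
      Typing (ctxAdd Γ₁ Γ₂) (.app b a r) q B
  | unit (Γ : Ctx) (q : ℕ) : Typing (ctxSMul 0 Γ) .unit q .unit
  | letUnit {Γ₁ Γ₂ : Ctx} {a b : Tm} {q q₀ : ℕ} {B : Ty} :
      Typing Γ₁ a (q * q₀) .unit →
      Typing Γ₂ b q B →
      gradeLe q₀ 1 →
      floor Γ₁ = floor Γ₂ →
      Typing (ctxAdd Γ₁ Γ₂) (.letUnit q₀ a b) q B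
  | pair {Γ₁ Γ₂ : Ctx} {a₁ a₂ : Tm} {q r : ℕ} {A₁ A₂ : Ty} :
      Typing Γ₁ a₁ (q * r) A₁ →
      Typing Γ₂ a₂ q A₂ →
      floor Γ₁ = floor Γ₂ →
      Typing (ctxAdd Γ₁ Γ₂) (.pair a₁ r a₂) q (.prod r A₁ A₂)
  | letPair {Γ₁ Γ₂ : Ctx} {a b : Tm} {q q₀ r x y : ℕ} {A₁ A₂ B : Ty} :
      Typing Γ₁ a (q * q₀) (.prod r A₁ A₂) →
      Typing (Γ₂ ++ [(x, q * q₀ * r, A₁), (y, q * q₀, A₂)]) b q B →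
      gradeLe q₀ 1 →
      floor Γ₁ = floor Γ₂ →
      Typing (ctxAdd Γ₁ Γ₂) (.letPair q₀ x r y a b) q B
  | inj1 {Γ : Ctx} {a₁ : Tm} {q : ℕ} {A₁ : Ty} (A₂ : Ty) :
      Typing Γ a₁ q A₁ → Typing Γ (.inj1 a₁) q (.sum A₁ A₂)
  | inj2 {Γ : Ctx} {a₂ : Tm} {q : ℕ} {A₂ : Ty} (A₁ : Ty) :
      Typing Γ a₂ q A₂ → Typing Γ (.inj2 a₂) q (.sum A₁ A₂)
  | case {Γ₁ Γ₂ : Ctx} {a b₁ b₂ : Tm} {q q₀ x₁ x₂ : ℕ} {A₁ A₂ B : Ty} :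
      Typing Γ₁ a (q * q₀) (.sum A₁ A₂) →
      Typing (Γ₂ ++ [(x₁, q * q₀, A₁)]) b₁ q B →
      Typing (Γ₂ ++ [(x₂, q * q₀, A₂)]) b₂ q B →
      gradeLe q₀ 1 →
      floor Γ₁ = floor Γ₂ →
      Typing (ctxAdd Γ₁ Γ₂) (.case q₀ a x₁ b₁ x₂ b₂) q B
  | subL {Γ Γ' : Ctx} {a : Tm} {q : ℕ} {A : Ty} :
      Typing Γ' a q A → ctxLe Γ Γ' → Typing Γ a q A
  | subR {Γ : Ctx} {a : Tm} {q q' : ℕ} {A : Ty} :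
      Typing Γ a q A → gradeLe q q' → Typing Γ a q' A

/-- Values: λ-abstractions, `unit`, pairs and injections. -/
def IsValue : Tm → Prop
  | .lam _ _ _ _ => True
  | .unit => True
  | .pair _ _ _ => True
  | .inj1 _ => True
  | .inj2 _ => True
  | _ => False

/-- Call-by-name small-step reduction `⊢ a ⇝ a'`. -/
inductive Step : Tm → Tm → Prop where
  | appBeta (r x : ℕ) (A : Ty) (b a : Tm) :
      Step (.app (.lam r x A b) a r) (subst x a b)
  | letUnitBeta (q₀ : ℕ) (b : Tm) :
      Step (.letUnit q₀ .unit b) b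
  | letPairBeta (q₀ x r y : ℕ) (a₁ a₂ b : Tm) :
      Step (.letPair q₀ x r y (.pair a₁ r a₂) b) (subst y a₂ (subst x a₁ b))
  | caseBeta1 (q₀ : ℕ) (a₁ : Tm) (x₁ : ℕ) (b₁ : Tm) (x₂ : ℕ) (b₂ : Tm) :
      Step (.case q₀ (.inj1 a₁) x₁ b₁ x₂ b₂) (subst x₁ a₁ b₁)
  | caseBeta2 (q₀ : ℕ) (a₂ : Tm) (x₁ : ℕ) (b₁ : Tm) (x₂ : ℕ) (b₂ : Tm) :
      Step (.case q₀ (.inj2 a₂) x₁ b₁ x₂ b₂) (subst x₂ a₂ b₂)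
  | appCong {b b' : Tm} (a : Tm) (r : ℕ) :
      Step b b' → Step (.app b a r) (.app b' a r)
  | letUnitCong {a a' : Tm} (q₀ : ℕ) (b : Tm) :
      Step a a' → Step (.letUnit q₀ a b) (.letUnit q₀ a' b)
  | letPairCong {a a' : Tm} (q₀ x r y : ℕ) (b : Tm) :
      Step a a' → Step (.letPair q₀ x r y a b) (.letPair q₀ x r y a' b)
  | caseCong {a a' : Tm} (q₀ x₁ : ℕ) (b₁ : Tm) (x₂ : ℕ) (b₂ : Tm) :
      Step a a' → Step (.case q₀ a x₁ b₁ x₂ b₂) (.case q₀ a' x₁ b₁ x₂ b₂)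

/-- A heap is a list of weighted bindings `x ↦^q a`. -/
abbrev Heap := List (ℕ × ℕ × Tm)

/-- The set of variables bound in a heap. -/
def heapDom (H : Heap) : Finset ℕ := (H.map Prod.fst).toFinset

/-- The heap reduction judgment `[H] a ⟹^q_S [H'] a'` of LDC(N≥). -/
inductive HeapStep : Heap → Tm → ℕ → Finset ℕ → Heap → Tm → Prop where
  | var {H₁ H₂ : Heap} {x r q : ℕ} {a : Tm} {S : Finset ℕ} :
      q ≠ 0 →
      HeapStep (H₁ ++ [(x, r + q, a)] ++ H₂) (.var x) q S (H₁ ++ [(x, r, a)] ++ H₂) a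
  | discard {H H' : Heap} {a a' : Tm} {q q' : ℕ} {S : Finset ℕ} :
      HeapStep H a q S H' a' → gradeLe q q' → HeapStep H a q' S H' a'
  | appCong {H H' : Heap} {b b' : Tm} {q : ℕ} {S : Finset ℕ} (a : Tm) (r : ℕ) :
      HeapStep H b q (S ∪ fv a) H' b' →
      HeapStep H (.app b a r) q S H' (.app b' a r)
  | letUnitCong {H H' : Heap} {a a' : Tm} {q : ℕ} {S : Finset ℕ} (q₀ : ℕ) (b : Tm) :
      HeapStep H a q (S ∪ fv b) H' a' →
      HeapStep H (.letUnit q₀ a b) q S H' (.letUnit q₀ a' b)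
  | letPairCong {H H' : Heap} {a a' : Tm} {q : ℕ} {S : Finset ℕ} (q₀ x r y : ℕ) (b : Tm) :
      HeapStep H a q (S ∪ fv b) H' a' →
      HeapStep H (.letPair q₀ x r y a b) q S H' (.letPair q₀ x r y a' b)
  | caseCong {H H' : Heap} {a a' : Tm} {q : ℕ} {S : Finset ℕ} (q₀ x₁ : ℕ) (b₁ : Tm) (x₂ : ℕ) (b₂ : Tm) :
      HeapStep H a q (S ∪ fv b₁ ∪ fv b₂) H' a' →
      HeapStep H (.case q₀ a x₁ b₁ x₂ b₂) q S H' (.case q₀ a' x₁ b₁ x₂ b₂)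
  | appBeta {H : Heap} {S : Finset ℕ} (r x : ℕ) (A : Ty) (b a : Tm) (q : ℕ) {x' : ℕ} :
      x' ∉ S → x' ∉ heapDom H →
      HeapStep H (.app (.lam r x A b) a r) q S
        (H ++ [(x', q * r, a)]) (subst x (.var x') b)
  | letUnitBeta {H : Heap} {S : Finset ℕ} (q₀ : ℕ) (b : Tm) (q : ℕ) :
      HeapStep H (.letUnit q₀ .unit b) q S H b
  | letPairBeta {H : Heap} {S : Finset ℕ} (q₀ x r y : ℕ) (a₁ a₂ b : Tm) (q : ℕ) {x' y' : ℕ} :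
      x' ∉ S → x' ∉ heapDom H → y' ∉ S → y' ∉ heapDom H → x' ≠ y' →
      HeapStep H (.letPair q₀ x r y (.pair a₁ r a₂) b) q S
        (H ++ [(x', q * q₀ * r, a₁), (y', q * q₀, a₂)])
        (subst y (.var y') (subst x (.var x') b))
  | caseBeta1 {H : Heap} {S : Finset ℕ} (q₀ : ℕ) (a₁ : Tm) (x₁ : ℕ) (b₁ : Tm) (x₂ : ℕ) (b₂ : Tm) (q : ℕ) {x' : ℕ} :
      x' ∉ S → x' ∉ heapDom H →
      HeapStep H (.case q₀ (.inj1 a₁) x₁ b₁ x₂ b₂) q S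
        (H ++ [(x', q * q₀, a₁)]) (subst x₁ (.var x') b₁)
  | caseBeta2 {H : Heap} {S : Finset ℕ} (q₀ : ℕ) (a₂ : Tm) (x₁ : ℕ) (b₁ : Tm) (x₂ : ℕ) (b₂ : Tm) (q : ℕ) {x' : ℕ} :
      x' ∉ S → x' ∉ heapDom H →
      HeapStep H (.case q₀ (.inj2 a₂) x₁ b₁ x₂ b₂) q S
        (H ++ [(x', q * q₀, a₂)]) (subst x₂ (.var x') b₂)

/-- The compatibility judgment `H ⊨ Γ` between heaps and contexts. -/
inductive Compat : Heap → Ctx → Prop where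
  | nil : Compat [] []
  | cons {H : Heap} {Γ Γ₀ : Ctx} {x q : ℕ} {a : Tm} {A : Ty} :
      floor Γ₀ = floor Γ →
      Typing Γ₀ a q A →
      Compat H (ctxAdd Γ Γ₀) →
      Compat (H ++ [(x, q, a)]) (Γ ++ [(x, q, A)])

/-- `n` successive heap reduction steps at grade `q`, where at each step the
support set is the domain of the current heap together with the free
variables of the current term. -/
inductive HeapSteps : Heap → Tm → ℕ → ℕ → Heap → Tm → Prop where
  | refl (H : Heap) (a : Tm) (q : ℕ) : HeapSteps H a q 0 H a
  | step {H H' H'' : Heap} {a a' a'' : Tm} {q n : ℕ} :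
      HeapStep H a q (heapDom H ∪ fv a) H' a' →
      HeapSteps H' a' q n H'' a'' →
      HeapSteps H a q (n + 1) H'' a''

/-! ### Auxiliary development for the proof of No Usage -/

/-- The variable names of a context. -/
def names (Γ : Ctx) : Finset ℕ := (Γ.map Prod.fst).toFinset

lemma names_of_floor_eq {Γ Γ' : Ctx} (h : floor Γ = floor Γ') : names Γ = names Γ' := by
  have h' : Γ.map Prod.fst = Γ'.map Prod.fst := by
    have := congrArg (List.map Prod.fst) h
    simpa [floor, List.map_map, Function.comp_def] using this
  simp [names, h']

lemma names_append (Γ₁ Γ₂ : Ctx) : names (Γ₁ ++ Γ₂) = names Γ₁ ∪ names Γ₂ := by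
  simp [names]

lemma names_smul (q : ℕ) (Γ : Ctx) : names (ctxSMul q Γ) = names Γ := by
  simp [names, ctxSMul, List.map_map, Function.comp_def]

lemma map_fst_ctxAdd : ∀ (Γ₁ Γ₂ : Ctx), Γ₁.length = Γ₂.length →
    (ctxAdd Γ₁ Γ₂).map Prod.fst = Γ₁.map Prod.fst
  | [], [], _ => rfl
  | e₁ :: t₁, e₂ :: t₂, h => by
      simp only [ctxAdd, List.zipWith_cons_cons, List.map_cons]
      rw [show ((List.zipWith (fun e₁ e₂ => (e₁.1, e₁.2.1 + e₂.2.1, e₁.2.2)) t₁ t₂).map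
        Prod.fst) = t₁.map Prod.fst from map_fst_ctxAdd t₁ t₂ (by simpa using h)]

lemma names_ctxAdd {Γ₁ Γ₂ : Ctx} (h : floor Γ₁ = floor Γ₂) :
    names (ctxAdd Γ₁ Γ₂) = names Γ₁ := by
  have hl : Γ₁.length = Γ₂.length := by
    have := congrArg List.length h; simpa [floor] using this
  simp [names, map_fst_ctxAdd Γ₁ Γ₂ hl]

lemma names_of_ctxLe {Γ Γ' : Ctx} (h : ctxLe Γ Γ') : names Γ = names Γ' := by
  have h' : Γ.map Prod.fst = Γ'.map Prod.fst := by
    induction h with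
    | nil => rfl
    | cons he _ ih => simp [he.1, ih]
  simp [names, h']

/-- Free variables of a well-typed term lie in its context. -/
lemma fv_subset_names {Γ : Ctx} {a : Tm} {q : ℕ} {A : Ty}
    (h : Typing Γ a q A) : fv a ⊆ names Γ := by
  induction h with
  | var Γ₁ Γ₂ x q A =>
      intro y hy
      simp only [fv, Finset.mem_singleton] at hy
      subst hy
      simp [names]
  | lam r x A _ ih =>
      intro y hy
      simp only [fv, Finset.mem_sdiff, Finset.mem_singleton] at hy
      have := ih hy.1
      rw [names_append] at this
      simp only [Finset.mem_union] at this
      rcases this with h' | h'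
      · exact h'
      · simp [names] at h'; exact absurd h' hy.2
  | app _ _ hfl ih₁ ih₂ =>
      rw [names_ctxAdd hfl]
      simp only [fv]
      exact Finset.union_subset ih₁ (by rw [names_of_floor_eq hfl]; exact ih₂)
  | unit Γ q => simp [fv]
  | letUnit _ _ _ hfl ih₁ ih₂ =>
      rw [names_ctxAdd hfl]
      simp only [fv]
      exact Finset.union_subset ih₁ (by rw [names_of_floor_eq hfl]; exact ih₂)
  | pair _ _ hfl ih₁ ih₂ =>
      rw [names_ctxAdd hfl]
      simp only [fv]
      exact Finset.union_subset ih₁ (by rw [names_of_floor_eq hfl]; exact ih₂)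
  | letPair _ _ _ hfl ih₁ ih₂ =>
      rw [names_ctxAdd hfl]
      simp only [fv]
      apply Finset.union_subset ih₁
      rw [names_of_floor_eq hfl]
      intro y hy
      simp only [Finset.mem_sdiff, Finset.mem_insert, Finset.mem_singleton] at hy
      have := ih₂ hy.1
      rw [names_append] at this
      simp only [Finset.mem_union] at this
      rcases this with h' | h'
      · exact h'
      · simp [names] at h'
        rcases h' with h' | h' <;> [exact absurd (Or.inl h') hy.2; exact absurd (Or.inr h') hy.2]
  | inj1 _ _ ih => exact ih
  | inj2 _ _ ih => exact ih
  | case _ _ _ _ hfl ih₁ ih₂ ih₃ =>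
      rw [names_ctxAdd hfl]
      simp only [fv]
      apply Finset.union_subset
      apply Finset.union_subset ih₁
      · rw [names_of_floor_eq hfl]
        intro y hy
        simp only [Finset.mem_sdiff, Finset.mem_singleton] at hy
        have := ih₂ hy.1
        rw [names_append] at this
        simp only [Finset.mem_union] at this
        rcases this with h' | h'
        · exact h'
        · simp [names] at h'; exact absurd h' hy.2
      · rw [names_of_floor_eq hfl]
        intro y hy
        simp only [Finset.mem_sdiff, Finset.mem_singleton] at hy
        have := ih₃ hy.1
        rw [names_append] at this
        simp only [Finset.mem_union] at this
        rcases this with h' | h'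
        · exact h'
        · simp [names] at h'; exact absurd h' hy.2
  | subL _ hle ih => rwa [names_of_ctxLe hle]
  | subR _ _ ih => exact ih

/-- A closed well-typed term has no free variables. -/
lemma fv_closed {a : Tm} {q : ℕ} {A : Ty} (h : Typing [] a q A) : fv a = ∅ := by
  have h' := fv_subset_names h
  have : names ([] : Ctx) = ∅ := by simp [names]
  rw [this] at h'
  exact Finset.subset_empty.mp h'

/-- Heaps related pointwise: same names and weights, bodies equal at nonzero weight. -/
def HRel (H H' : Heap) : Prop :=
  List.Forall₂ (fun e e' => e.1 = e'.1 ∧ e.2.1 = e'.2.1 ∧ (e.2.1 ≠ 0 → e.2.2 = e'.2.2)) H H'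

lemma HRel.dom {H H' : Heap} (h : HRel H H') : heapDom H = heapDom H' := by
  have h' : H.map Prod.fst = H'.map Prod.fst := by
    induction h with
    | nil => rfl
    | cons he _ ih => simp [he.1, ih]
  simp [heapDom, h']

lemma HRel.refl (H : Heap) : HRel H H := by
  induction H with
  | nil => exact .nil
  | cons e t ih => exact .cons ⟨rfl, rfl, fun _ => rfl⟩ ih

lemma HRel.append {H₁ H₂ H₁' H₂' : Heap} (h₁ : HRel H₁ H₁') (h₂ : HRel H₂ H₂') :
    HRel (H₁ ++ H₂) (H₁' ++ H₂') := by
  induction h₁ with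
  | nil => exact h₂
  | cons he _ ih => exact .cons he ih

lemma forall₂_split {α β : Type*} {R : α → β → Prop} :
    ∀ {l₁ : List α} {e : α} {l₂ : List α} {m : List β},
    List.Forall₂ R (l₁ ++ [e] ++ l₂) m →
    ∃ m₁ e' m₂, m = m₁ ++ [e'] ++ m₂ ∧ List.Forall₂ R l₁ m₁ ∧ R e e' ∧ List.Forall₂ R l₂ m₂ := by
  intro l₁
  induction l₁ with
  | nil =>
      intro e l₂ m h
      cases h with
      | cons he ht => exact ⟨[], _, _, rfl, .nil, he, ht⟩
  | cons a t ih =>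
      intro e l₂ m h
      cases h with
      | cons he ht =>
        obtain ⟨m₁, e', m₂, rfl, h1, h2, h3⟩ := ih ht
        exact ⟨_ :: m₁, e', m₂, rfl, .cons he h1, h2, h3⟩

/-- Simulation, identical-term case: a step at nonzero grade from a related heap
can be mirrored exactly. -/
lemma sim_refl {H : Heap} {c : Tm} {q : ℕ} {S : Finset ℕ} {H₂ : Heap} {c₂ : Tm}
    (h : HeapStep H c q S H₂ c₂) :
    q ≠ 0 → ∀ H', HRel H H' → ∃ H₂', HeapStep H' c q S H₂' c₂ ∧ HRel H₂ H₂' := by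
  induction h with
  | @var H₁ Hb x r q a S hq =>
      intro _ H' hrel
      obtain ⟨m₁, e', m₂, rfl, h1, h2, h3⟩ := forall₂_split hrel
      obtain ⟨y, w, b⟩ := e'
      obtain ⟨hx, hw, hb⟩ := h2
      dsimp only at hx hw hb
      subst hx hw
      have hbody : a = b := hb (show r + q ≠ 0 by omega)
      subst hbody
      exact ⟨m₁ ++ [(x, r, a)] ++ m₂, .var hq,
        HRel.append (HRel.append h1 (.cons ⟨rfl, rfl, fun _ => rfl⟩ .nil)) h3⟩
  | @discard Hd Hd' ad ad' qd qd' Sd _ hle ih =>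
      intro hq' H' hrel
      have hq : qd ≠ 0 := by
        intro h0; exact hq' (by simp only [gradeLe] at hle; omega)
      obtain ⟨H₂', hs, hr⟩ := ih hq H' hrel
      exact ⟨H₂', .discard hs hle, hr⟩
  | appCong a r _ ih =>
      intro hq H' hrel
      obtain ⟨H₂', hs, hr⟩ := ih hq H' hrel
      exact ⟨H₂', .appCong a r hs, hr⟩
  | letUnitCong q₀ b _ ih =>
      intro hq H' hrel
      obtain ⟨H₂', hs, hr⟩ := ih hq H' hrel
      exact ⟨H₂', .letUnitCong q₀ b hs, hr⟩
  | letPairCong q₀ x r y b _ ih =>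
      intro hq H' hrel
      obtain ⟨H₂', hs, hr⟩ := ih hq H' hrel
      exact ⟨H₂', .letPairCong q₀ x r y b hs, hr⟩
  | caseCong q₀ x₁ b₁ x₂ b₂ _ ih =>
      intro hq H' hrel
      obtain ⟨H₂', hs, hr⟩ := ih hq H' hrel
      exact ⟨H₂', .caseCong q₀ x₁ b₁ x₂ b₂ hs, hr⟩
  | @appBeta H S r x A b a q x' hS hH =>
      intro _ H' hrel
      exact ⟨_, .appBeta r x A b a q hS (hrel.dom ▸ hH),
        HRel.append hrel (.cons ⟨rfl, rfl, fun _ => rfl⟩ .nil)⟩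
  | letUnitBeta q₀ b q =>
      intro _ H' hrel
      exact ⟨H', .letUnitBeta q₀ b q, hrel⟩
  | @letPairBeta H S q₀ x r y a₁ a₂ b q x' y' hS1 hH1 hS2 hH2 hne =>
      intro _ H' hrel
      exact ⟨_, .letPairBeta q₀ x r y a₁ a₂ b q hS1 (hrel.dom ▸ hH1) hS2 (hrel.dom ▸ hH2) hne,
        HRel.append hrel (.cons ⟨rfl, rfl, fun _ => rfl⟩
          (.cons ⟨rfl, rfl, fun _ => rfl⟩ .nil))⟩
  | @caseBeta1 H S q₀ a x₁ b₁ x₂ b₂ q x' hS hH =>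
      intro _ H' hrel
      exact ⟨_, .caseBeta1 q₀ a x₁ b₁ x₂ b₂ q hS (hrel.dom ▸ hH),
        HRel.append hrel (.cons ⟨rfl, rfl, fun _ => rfl⟩ .nil)⟩
  | @caseBeta2 H S q₀ a x₁ b₁ x₂ b₂ q x' hS hH =>
      intro _ H' hrel
      exact ⟨_, .caseBeta2 q₀ a x₁ b₁ x₂ b₂ q hS (hrel.dom ▸ hH),
        HRel.append hrel (.cons ⟨rfl, rfl, fun _ => rfl⟩ .nil)⟩

/-- Simulation, differing-argument case: a step of `g a₁^0` can be mirrored by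
`g a₂^0`, with the difference confined to a weight-0 binding or preserved. -/
lemma sim_app {a₁ a₂ : Tm} (hfv : fv a₁ = fv a₂)
    {H : Heap} {c : Tm} {q : ℕ} {S : Finset ℕ} {H₂ : Heap} {c₂ : Tm}
    (h : HeapStep H c q S H₂ c₂) :
    q ≠ 0 → ∀ g, c = .app g a₁ 0 → ∀ H', HRel H H' →
    ∃ H₂' c₂', HeapStep H' (.app g a₂ 0) q S H₂' c₂' ∧ HRel H₂ H₂' ∧
      (c₂' = c₂ ∨ ∃ g', c₂ = .app g' a₁ 0 ∧ c₂' = .app g' a₂ 0) := by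
  induction h with
  | var hq => intro _ g hc; exact absurd hc (by simp)
  | @discard Hd Hd' ad ad' qd qd' Sd _ hle ih =>
      intro hq' g hc H' hrel
      have hq : qd ≠ 0 := by
        intro h0; exact hq' (by simp only [gradeLe] at hle; omega)
      obtain ⟨H₂', c₂', hs, hr, hrel'⟩ := ih hq g hc H' hrel
      exact ⟨H₂', c₂', HeapStep.discard hs hle, hr, hrel'⟩
  | @appCong H H' b b' q S a r hstep ih =>
      intro hq g hc Hx hrel
      obtain ⟨rfl, rfl, rfl⟩ : b = g ∧ a = a₁ ∧ r = 0 := by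
        injection hc with h1 h2 h3; exact ⟨h1, h2, h3⟩
      obtain ⟨H₂', hs, hr⟩ := sim_refl hstep hq Hx hrel
      refine ⟨H₂', .app b' a₂ 0, .appCong a₂ 0 ?_, hr, Or.inr ⟨b', rfl, rfl⟩⟩
      rwa [← hfv]
  | @letUnitCong H H' a a' q S q₀ b hstep ih => intro _ g hc; exact absurd hc (by simp)
  | letPairCong q₀ x r y b hstep ih => intro _ g hc; exact absurd hc (by simp)
  | caseCong q₀ x₁ b₁ x₂ b₂ hstep ih => intro _ g hc; exact absurd hc (by simp)
  | @appBeta H S r x A b a q x' hS hH =>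
      intro _ g hc H' hrel
      obtain ⟨rfl, rfl, rfl⟩ : g = .lam r x A b ∧ a = a₁ ∧ r = 0 := by
        injection hc with h1 h2 h3; exact ⟨h1.symm, h2, h3⟩
      refine ⟨H' ++ [(x', q * 0, a₂)], subst x (.var x') b,
        .appBeta 0 x A b a₂ q hS (hrel.dom ▸ hH), ?_, Or.inl rfl⟩
      exact HRel.append hrel (.cons ⟨rfl, rfl, fun h0 => absurd (Nat.mul_zero q) h0⟩ .nil)
  | letUnitBeta q₀ b q => intro _ g hc; exact absurd hc (by simp)
  | letPairBeta q₀ x r y b₁' b₂' b q _ _ _ _ _ => intro _ g hc; exact absurd hc (by simp)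
  | caseBeta1 q₀ a x₁ b₁ x₂ b₂ q _ _ => intro _ g hc; exact absurd hc (by simp)
  | caseBeta2 q₀ a x₁ b₁ x₂ b₂ q _ _ => intro _ g hc; exact absurd hc (by simp)

/-- Multi-step simulation. -/
lemma sim_steps {a₁ a₂ : Tm} (h1 : fv a₁ = ∅) (h2 : fv a₂ = ∅)
    {n q : ℕ} {H₀ : Heap} {c₀ : Tm} {H : Heap} {c : Tm} (hq : q ≠ 0)
    (hsteps : HeapSteps H₀ c₀ q n H c) :
    ∀ H₀' c₀', HRel H₀ H₀' →
      (c₀' = c₀ ∨ ∃ g, c₀ = .app g a₁ 0 ∧ c₀' = .app g a₂ 0) →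
      ∃ H' c', HeapSteps H₀' c₀' q n H' c' := by
  induction hsteps with
  | refl H a q => intro H₀' c₀' _ _; exact ⟨H₀', c₀', .refl _ _ _⟩
  | @step H H' H'' a a' a'' q n hstep _ ih =>
      intro H₀' c₀' hrel hterm
      rcases hterm with rfl | ⟨g, rfl, rfl⟩
      · obtain ⟨H₂', hs, hr⟩ := sim_refl hstep hq H₀' hrel
        obtain ⟨Hf, cf, hrest⟩ := ih hq H₂' a' hr (Or.inl rfl)
        exact ⟨Hf, cf, .step (hrel.dom ▸ hs) hrest⟩
      · obtain ⟨H₂', c₂', hs, hr, hrel'⟩ :=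
          sim_app (h1.trans h2.symm) hstep hq g rfl H₀' hrel
        obtain ⟨Hf, cf, hrest⟩ := ih hq H₂' c₂' hr (by tauto)
        refine ⟨Hf, cf, .step ?_ hrest⟩
        have hdom := hrel.dom
        have hfv : fv (Tm.app g a₁ 0) = fv (Tm.app g a₂ 0) := by simp [fv, h1, h2]
        rw [← hdom, ← hfv]
        exact hs

end LDC

/-- **No Usage (Corollary 5.4 of LDC).** In LDC(N≥): let `∅ ⊢ f :^1 (^0 A → A)`,
and let `∅ ⊢ a₁ :^0 A` and `∅ ⊢ a₂ :^0 A`. Then the terms `f a₁^0` and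
`f a₂^0` have the same operational behavior under the heap semantics: either
for every `n` there is an `n`-step reduction of the one iff there is one of
the other (so both diverge together), or both reduce, in the same number of
steps, to the same value term `v`. -/
theorem LDC.no_usage {f a₁ a₂ : LDC.Tm} {A : LDC.Ty}
    (hf : LDC.Typing [] f 1 (.arr 0 A A))
    (h₁ : LDC.Typing [] a₁ 0 A)
    (h₂ : LDC.Typing [] a₂ 0 A) :
    (∀ n : ℕ,
      (∃ (H₁ : LDC.Heap) (c₁ : LDC.Tm),
        LDC.HeapSteps [] (.app f a₁ 0) 1 n H₁ c₁) ↔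
      (∃ (H₂ : LDC.Heap) (c₂ : LDC.Tm),
        LDC.HeapSteps [] (.app f a₂ 0) 1 n H₂ c₂)) ∨
    (∃ (n : ℕ) (v : LDC.Tm) (H₁ H₂ : LDC.Heap),
      LDC.IsValue v ∧
      LDC.HeapSteps [] (.app f a₁ 0) 1 n H₁ v ∧
      LDC.HeapSteps [] (.app f a₂ 0) 1 n H₂ v) := by
  left
  intro n
  have hc₁ := LDC.fv_closed h₁
  have hc₂ := LDC.fv_closed h₂
  constructor
  · rintro ⟨H₁, c₁, hs⟩
    obtain ⟨H', c', hs'⟩ := LDC.sim_steps hc₁ hc₂ one_ne_zero hs [] (.app f a₂ 0)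
      .nil (Or.inr ⟨f, rfl, rfl⟩)
    exact ⟨H', c', hs'⟩
  · rintro ⟨H₂, c₂, hs⟩
    obtain ⟨H', c', hs'⟩ := LDC.sim_steps hc₂ hc₁ one_ne_zero hs [] (.app f a₁ 0)
      .nil (Or.inr ⟨f, rfl, rfl⟩)
    exact ⟨H', c', hs'⟩
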